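/- Fix d ≥ 1 and α ≥ 1, and let F be a finite family of n measurable objects in ℝ^d, each contained in a ball B of radius δ, such that every object o ∈ F has volume at least Vol(B)/(4α)^d. Then there exists a set of at most ⌊(4α)^d (ln n + 1)⌋ points in B stabbing every object of F (i.e., every o ∈ F contains at least one of the points). -/

import Mathlib

open MeasureTheory ENNReal

attribute [local instance] Classical.propDecidable

variable {E : Type*} [MeasurableSpace E] {μ : Measure E}

/-- Averaging: some point of `B` lies in at least `n/M` of the objects. -/
lemma exists_good_point {B : Set E} (hB : MeasurableSet B) (h0 : μ B ≠ 0) (htop : μ B ≠ ⊤)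
    {M : ℝ} (hM : 0 < M) (F : Finset (Set E)) (hF : F.Nonempty)
    (hmeas : ∀ o ∈ F, MeasurableSet o) (hsub : ∀ o ∈ F, o ⊆ B)
    (hvol : ∀ o ∈ F, μ B ≤ ENNReal.ofReal M * μ o) :
    ∃ p ∈ B, (F.card : ℝ) ≤ M * (F.filter (fun o => p ∈ o)).card := by
  by_contra hcon
  push_neg at hcon
  set n := F.card with hn
  have hn1 : 1 ≤ n := hF.card_pos
  have hdiv : 0 < (n : ℝ) / M := by positivity
  set K : ℕ := ⌈(n : ℝ) / M⌉₊ - 1 with hK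
  have hceil1 : 1 ≤ ⌈(n : ℝ) / M⌉₊ := Nat.one_le_ceil_iff.mpr hdiv
  have hKlt : (K : ℝ) < (n : ℝ) / M := by
    have := Nat.ceil_lt_add_one (le_of_lt hdiv)
    have hc : (K : ℝ) = (⌈(n : ℝ) / M⌉₊ : ℝ) - 1 := by
      rw [hK, Nat.cast_sub hceil1]; norm_num
    linarith
  have hMK : M * K < n := by
    have := (lt_div_iff₀ hM).mp hKlt
    linarith
  -- every point of B lies in at most K objects
  have hKbound : ∀ p ∈ B, (F.filter (fun o => p ∈ o)).card ≤ K := by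
    intro p hp
    have h1 : ((F.filter (fun o => p ∈ o)).card : ℝ) < (n : ℝ) / M := by
      have := hcon p hp
      rw [lt_div_iff₀ hM]
      linarith [this]
    have h2 : (F.filter (fun o => p ∈ o)).card < ⌈(n : ℝ) / M⌉₊ :=
      Nat.lt_ceil.mpr h1
    omega
  -- pointwise bound on the sum of indicators
  have hpt : ∀ x, (∑ o ∈ F, o.indicator (1 : E → ℝ≥0∞) x)
      ≤ (K : ℝ≥0∞) * B.indicator 1 x := by
    intro x
    by_cases hx : x ∈ B
    · have hsum : (∑ o ∈ F, o.indicator (1 : E → ℝ≥0∞) x)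
          = ((F.filter (fun o => x ∈ o)).card : ℝ≥0∞) := by
        rw [Finset.card_filter]
        push_cast
        refine Finset.sum_congr rfl fun o _ => ?_
        by_cases h : x ∈ o <;> simp [Set.indicator, h]
      rw [hsum, Set.indicator_of_mem hx]
      simp only [Pi.one_apply, mul_one]
      exact_mod_cast Nat.cast_le.mpr (hKbound x hx)
    · have : ∀ o ∈ F, o.indicator (1 : E → ℝ≥0∞) x = 0 := fun o ho =>
        Set.indicator_of_notMem (fun h => hx (hsub o ho h)) _
      rw [Finset.sum_eq_zero this]
      exact zero_le
  -- integrate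
  have hint : (∑ o ∈ F, μ o) ≤ (K : ℝ≥0∞) * μ B := by
    calc (∑ o ∈ F, μ o) = ∑ o ∈ F, ∫⁻ x, o.indicator 1 x ∂μ := by
          refine Finset.sum_congr rfl fun o ho => ?_
          rw [lintegral_indicator_one (hmeas o ho)]
      _ = ∫⁻ x, ∑ o ∈ F, o.indicator 1 x ∂μ := by
          rw [lintegral_finset_sum]
          intro o ho
          exact (measurable_const.indicator (hmeas o ho))
      _ ≤ ∫⁻ x, (K : ℝ≥0∞) * B.indicator 1 x ∂μ := lintegral_mono hpt
      _ = (K : ℝ≥0∞) * μ B := by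
          rw [lintegral_const_mul' _ _ (by simp : (K : ℝ≥0∞) ≠ ⊤),
            lintegral_indicator_one hB]
  have hbig : (n : ℝ≥0∞) * μ B ≤ ENNReal.ofReal M * ((K : ℝ≥0∞) * μ B) := by
    calc (n : ℝ≥0∞) * μ B = ∑ _o ∈ F, μ B := by
          rw [Finset.sum_const, nsmul_eq_mul]
      _ ≤ ∑ o ∈ F, ENNReal.ofReal M * μ o := Finset.sum_le_sum hvol
      _ = ENNReal.ofReal M * ∑ o ∈ F, μ o := by rw [Finset.mul_sum]
      _ ≤ ENNReal.ofReal M * ((K : ℝ≥0∞) * μ B) := mul_le_mul_right hint _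
  have hcancel : (n : ℝ≥0∞) ≤ ENNReal.ofReal M * (K : ℝ≥0∞) := by
    rw [← mul_assoc] at hbig
    exact (ENNReal.mul_le_mul_iff_left h0 htop).mp hbig
  have hfin : (n : ℝ) ≤ M * K := by
    have : ENNReal.ofReal M * (K : ℝ≥0∞) = ENNReal.ofReal (M * K) := by
      rw [ENNReal.ofReal_mul (le_of_lt hM)]
      congr 1
      exact (ENNReal.ofReal_natCast K).symm
    rw [this] at hcancel
    have := ENNReal.toReal_mono (by simp) hcancel
    simpa [ENNReal.toReal_ofReal (by positivity : (0:ℝ) ≤ M * K)] using this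
  linarith

lemma stab_aux {B : Set E} (hB : MeasurableSet B) (h0 : μ B ≠ 0) (htop : μ B ≠ ⊤)
    {M : ℝ} (hM : 4 ≤ M) :
    ∀ n : ℕ, ∀ F : Finset (Set E), F.card = n →
    (∀ o ∈ F, MeasurableSet o) → (∀ o ∈ F, o ⊆ B) →
    (∀ o ∈ F, μ B ≤ ENNReal.ofReal M * μ o) →
    ∃ P : Finset E, (↑P : Set E) ⊆ B ∧ P.card ≤ ⌊M * (Real.log n + 1)⌋₊ ∧
      ∀ o ∈ F, ∃ p ∈ P, p ∈ o := by
  have hM0 : (0:ℝ) < M := by linarith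
  intro n
  induction n using Nat.strong_induction_on with
  | _ n IH =>
    intro F hcard hmeas hsub hvol
    rcases Nat.eq_zero_or_pos n with hn0 | hn1
    · refine ⟨∅, by simp, by simp, ?_⟩
      intro o ho
      exact absurd (Finset.card_eq_zero.mp (hcard.trans hn0) ▸ ho) (by simp)
    · have hF : F.Nonempty := Finset.card_pos.mp (hcard ▸ hn1)
      obtain ⟨p, hpB, hps⟩ := exists_good_point hB h0 htop hM0 F hF hmeas hsub hvol
      rw [hcard] at hps
      set s := (F.filter (fun o => p ∈ o)).card with hs
      set F' := F.filter (fun o => p ∉ o) with hF'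
      have hsplit : s + F'.card = n := by
        rw [hs, hF', ← hcard]
        exact Finset.card_filter_add_card_filter_not _
      have hs1 : 1 ≤ s := by
        by_contra h
        push_neg at h
        interval_cases s
        · simp at hps; rw [hps] at hn1; omega
      set n' := F'.card with hn'
      have hlog1 : (0:ℝ) ≤ Real.log n := Real.log_natCast_nonneg n
      have hfloor4 : 1 ≤ ⌊M * (Real.log n + 1)⌋₊ := by
        refine Nat.le_floor ?_
        push_cast
        nlinarith
      have hstab' : ∀ o ∈ F, o ∉ F' → p ∈ o := by
        intro o ho ho'
        by_contra h
        exact ho' (Finset.mem_filter.mpr ⟨ho, h⟩)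
      rcases Nat.eq_zero_or_pos n' with hz | hn'1
      · refine ⟨{p}, by simpa using hpB, by simpa using hfloor4, ?_⟩
        intro o ho
        refine ⟨p, Finset.mem_singleton_self p, hstab' o ho ?_⟩
        intro hmem
        have hFe : F' = ∅ := Finset.card_eq_zero.mp hz
        rw [hFe] at hmem
        exact absurd hmem (by simp)
      · have hn'lt : n' < n := by omega
        obtain ⟨P', hP'B, hP'card, hP'stab⟩ := IH n' hn'lt F' rfl
          (fun o ho => hmeas o (Finset.mem_filter.mp ho).1)
          (fun o ho => hsub o (Finset.mem_filter.mp ho).1)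
          (fun o ho => hvol o (Finset.mem_filter.mp ho).1)
        refine ⟨insert p P', ?_, ?_, ?_⟩
        · intro x hx
          rcases Finset.mem_coe.mp hx |> Finset.mem_insert.mp with h | h
          · exact h ▸ hpB
          · exact hP'B (Finset.mem_coe.mpr h)
        · -- cardinality bound
          have hle : (insert p P').card ≤ P'.card + 1 := Finset.card_insert_le _ _
          have hsreal : (n:ℝ)/M ≤ s := by
            rw [div_le_iff₀ hM0]; linarith [hps]
          have hn'real : (n':ℝ) ≤ n - (n:ℝ)/M := by
            have : (n':ℝ) = (n:ℝ) - s := by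
              have : (s:ℝ) + n' = n := by exact_mod_cast hsplit
              linarith
            linarith
          have hlogle : Real.log n' ≤ Real.log n - 1/M := by
            have h1M : (0:ℝ) < 1 - 1/M := by
              have : 1/M ≤ 1/4 := by
                apply div_le_div_of_nonneg_left <;> linarith
              linarith
            have hnn : (0:ℝ) < n := by exact_mod_cast hn1
            have heq : (n:ℝ) - (n:ℝ)/M = n * (1 - 1/M) := by ring
            calc Real.log n' ≤ Real.log ((n:ℝ) * (1 - 1/M)) := by
                  apply Real.log_le_log (by exact_mod_cast hn'1)
                  rw [← heq]; exact hn'real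
              _ = Real.log n + Real.log (1 - 1/M) :=
                  Real.log_mul (ne_of_gt hnn) (ne_of_gt h1M)
              _ ≤ Real.log n - 1/M := by
                  have := Real.log_le_sub_one_of_pos h1M
                  linarith
          have hkey : M * (Real.log n' + 1) + 1 ≤ M * (Real.log n + 1) := by
            have : M * Real.log n' ≤ M * Real.log n - 1 := by
              have := mul_le_mul_of_nonneg_left hlogle (le_of_lt hM0)
              have hMdiv : M * (1/M) = 1 := by field_simp
              nlinarith
            linarith
          have hlog1' : (0:ℝ) ≤ Real.log n' := Real.log_natCast_nonneg n'
          have hfl : ⌊M * (Real.log n' + 1)⌋₊ + 1 ≤ ⌊M * (Real.log n + 1)⌋₊ := by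
            rw [← Nat.floor_add_one (by positivity)]
            exact Nat.floor_mono hkey
          omega
        · intro o ho
          by_cases h : o ∈ F'
          · obtain ⟨q, hq, hqo⟩ := hP'stab o h
            exact ⟨q, Finset.mem_insert_of_mem hq, hqo⟩
          · exact ⟨p, Finset.mem_insert_self _ _, hstab' o ho h⟩

/-- Let `F` be a finite family of `n` measurable objects in `ℝ^d`, each
contained in a ball `B` of radius `δ`, each of volume at least `Vol(B)/(4α)^d` (with
`α ≥ 1`). Then at most `⌊(4α)^d (ln n + 1)⌋` points of `B` suffice to stab every object. -/
theorem stabbing_of_large_volume (d : ℕ) (hd : 1 ≤ d) (α : ℝ) (hα : 1 ≤ α)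
    (c : EuclideanSpace ℝ (Fin d)) (δ : ℝ) (hδ : 0 < δ)
    (F : Finset (Set (EuclideanSpace ℝ (Fin d))))
    (hmeas : ∀ o ∈ F, MeasurableSet o)
    (hsub : ∀ o ∈ F, o ⊆ Metric.closedBall c δ)
    (hvol : ∀ o ∈ F,
      volume (Metric.closedBall c δ) ≤ ENNReal.ofReal ((4 * α) ^ d) * volume o) :
    ∃ P : Finset (EuclideanSpace ℝ (Fin d)),
      (↑P : Set (EuclideanSpace ℝ (Fin d))) ⊆ Metric.closedBall c δ ∧
      P.card ≤ Nat.floor ((4 * α) ^ d * (Real.log F.card + 1)) ∧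
      ∀ o ∈ F, ∃ p ∈ P, p ∈ o := by
  have hM : (4:ℝ) ≤ (4 * α) ^ d := by
    calc (4:ℝ) = 4 ^ 1 := by norm_num
      _ ≤ (4:ℝ) ^ d := pow_le_pow_right₀ (by norm_num) hd
      _ ≤ (4 * α) ^ d := pow_le_pow_left₀ (by norm_num) (by linarith) d
  have h0 : volume (Metric.closedBall c δ) ≠ 0 :=
    (Metric.measure_closedBall_pos volume c hδ).ne'
  have htop : volume (Metric.closedBall c δ) ≠ ⊤ :=
    measure_closedBall_lt_top.ne
  exact stab_aux measurableSet_closedBall h0 htop hM F.card F rfl hmeas hsub hvol
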